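/- Let β be a class-KL function. Then there exist class-K∞ functions α₁ and α₂ such that β(r, t) ≤ α₂(α₁(r) e^{-t}) for all r ≥ 0 and all t ≥ 0. -/

import Mathlib

open Filter Set
open intervalIntegral

/-- Class `K` comparison functions on `[0,∞)`. -/
def ClassK (f : ℝ → ℝ) : Prop :=
  ContinuousOn f (Ici 0) ∧ StrictMonoOn f (Ici 0) ∧ f 0 = 0 ∧ ∀ r, 0 ≤ r → 0 ≤ f r

/-- Class `K∞` comparison functions. -/
def ClassKInf (f : ℝ → ℝ) : Prop :=
  ClassK f ∧ ∀ M : ℝ, ∃ r, 0 ≤ r ∧ M < f r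

/-- Class `KL` comparison functions. -/
def ClassKL (β : ℝ → ℝ → ℝ) : Prop :=
  (∀ t, 0 ≤ t → ClassK (fun r => β r t)) ∧
  ∀ r, 0 < r → ContinuousOn (β r) (Ici 0) ∧ AntitoneOn (β r) (Ici 0) ∧
    Tendsto (β r) atTop (nhds 0)

/-- Right-hand lower Dini derivative. -/
noncomputable def dini (f : ℝ → ℝ) (t : ℝ) : ℝ :=
  liminf (fun τ => (f (t + τ) - f t) / τ) (nhdsWithin 0 (Ioi 0))

/-- Any monotone function vanishing on `(-∞,0]` and tending to `0` at `0⁺`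
has a `K∞` majorant on `[0,∞)`. -/
lemma exists_KInf_majorant (φ : ℝ → ℝ) (hmono : Monotone φ)
    (hzero : ∀ v, v ≤ 0 → φ v = 0)
    (htend : ∀ ε, 0 < ε → ∃ δ, 0 < δ ∧ ∀ v, 0 < v → v ≤ δ → φ v ≤ ε) :
    ∃ α : ℝ → ℝ, ClassKInf α ∧ ∀ v, 0 ≤ v → φ v ≤ α v := by
  have hnn : ∀ v, 0 ≤ φ v := by
    intro v
    rcases le_or_gt v 0 with h | h
    · exact (hzero v h).ge
    · rw [← hzero 0 le_rfl]; exact hmono h.le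
  have hInt : ∀ a b : ℝ, IntervalIntegrable φ MeasureTheory.volume a b :=
    fun a b => hmono.intervalIntegrable
  set P : ℝ → ℝ := fun x => ∫ t in (0:ℝ)..x, φ t with hP
  have hPc : Continuous P := intervalIntegral.continuous_primitive hInt 0
  set g : ℝ → ℝ := fun v => ∫ s in (1:ℝ)..2, φ (v * s) with hg
  -- identity: for v ≠ 0, g v = (P (2*v) - P v) / v
  have hgP : ∀ v : ℝ, 0 < v → g v = (P (2*v) - P v) / v := by
    intro v hv
    have h1 := smul_integral_comp_mul_left (a := (1:ℝ)) (b := 2) φ v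
    have h2 : (∫ x in v..2*v, φ x) = P (2*v) - P v := by
      have := integral_add_adjacent_intervals (hInt 0 v) (hInt v (2*v))
      simp only [hP] at *
      linarith [this]
    rw [mul_one, mul_comm v 2] at h1
    rw [hg, eq_div_iff (ne_of_gt hv), mul_comm, ← smul_eq_mul, h1, h2]
  have hgInt : ∀ v : ℝ, IntervalIntegrable (fun s => φ (v * s)) MeasureTheory.volume 1 2 := by
    intro v
    rcases le_or_gt 0 v with h | h
    · exact (hmono.comp (fun s t hst => mul_le_mul_of_nonneg_left hst h)).intervalIntegrable
    · refine (_root_.intervalIntegrable_const (c := (0:ℝ))).congr_ae ?_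
      filter_upwards [MeasureTheory.ae_restrict_mem measurableSet_uIoc] with s hs
      rw [uIoc_of_le (by norm_num : (1:ℝ) ≤ 2)] at hs
      exact (hzero _ (mul_nonpos_iff.2 (Or.inr ⟨h.le, le_trans zero_le_one hs.1.le⟩))).symm
  have hglb : ∀ v : ℝ, 0 ≤ v → φ v ≤ g v := by
    intro v hv
    have h := integral_mono_on (μ := MeasureTheory.volume) (f := fun _ => φ v)
      (g := fun s => φ (v * s)) (by norm_num : (1:ℝ) ≤ 2)
      (_root_.intervalIntegrable_const) (hgInt v)
      (fun s hs => hmono (by nlinarith [hs.1] : v ≤ v * s))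
    simp only [intervalIntegral.integral_const, smul_eq_mul] at h
    have : g v = ∫ s in (1:ℝ)..2, φ (v * s) := rfl
    rw [this]; linarith
  have hgub : ∀ v : ℝ, 0 ≤ v → g v ≤ φ (2*v) := by
    intro v hv
    have h := integral_mono_on (μ := MeasureTheory.volume) (f := fun s => φ (v * s))
      (g := fun _ => φ (2*v)) (by norm_num : (1:ℝ) ≤ 2)
      (hgInt v) (_root_.intervalIntegrable_const)
      (fun s hs => hmono (by nlinarith [hs.2] : v * s ≤ 2 * v))
    simp only [intervalIntegral.integral_const, smul_eq_mul] at h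
    have : g v = ∫ s in (1:ℝ)..2, φ (v * s) := rfl
    rw [this]; linarith
  have hgmono : ∀ v w : ℝ, 0 ≤ v → v ≤ w → g v ≤ g w := by
    intro v w hv hvw
    exact integral_mono_on (by norm_num : (1:ℝ) ≤ 2) (hgInt v) (hgInt w)
      (fun s hs => hmono (by nlinarith [hs.1] : v * s ≤ w * s))
  have hgnn : ∀ v : ℝ, 0 ≤ v → 0 ≤ g v := fun v hv => le_trans (hnn v) (hglb v hv)
  refine ⟨fun v => if v ≤ 0 then v else v + g v, ⟨⟨?_, ?_, by norm_num, ?_⟩, ?_⟩, ?_⟩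
  · -- continuity
    intro v hv
    rcases eq_or_lt_of_le (Set.mem_Ici.mp hv : (0:ℝ) ≤ v) with h0 | h0
    · rw [Metric.continuousWithinAt_iff]
      intro ε hε
      obtain ⟨δ, hδ, hδε⟩ := htend (ε/2) (by linarith)
      refine ⟨min (min (ε/2) (δ/2)) 1, by positivity, ?_⟩
      intro w hw hdist
      have hw0 : 0 ≤ w := hw
      have hwd : w < min (min (ε/2) (δ/2)) 1 := by
        rw [← h0, Real.dist_eq, sub_zero] at hdist
        exact lt_of_le_of_lt (le_abs_self w) hdist
      have hub : (if w ≤ 0 then w else w + g w) ≤ w + φ (2*w) := by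
        rcases le_or_gt w 0 with h | h
        · simp [h]
          have : φ (2*w) = 0 := hzero _ (by linarith)
          nlinarith [hnn (2*w)]
        · rw [if_neg (not_le.2 h)]
          linarith [hgub w hw0]
      have hlb : (0:ℝ) ≤ (if w ≤ 0 then w else w + g w) := by
        rcases le_or_gt w 0 with h | h
        · simp [h]; linarith
        · rw [if_neg (not_le.2 h)]
          linarith [hgnn w hw0]
      have hφw : φ (2*w) ≤ ε/2 := by
        rcases lt_or_ge 0 w with h | h
        · exact hδε _ (by linarith) (by nlinarith [lt_of_lt_of_le hwd (le_trans (min_le_left _ _) (min_le_right _ _))])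
        · rw [hzero _ (by linarith)]; linarith
      have hwε : w < ε/2 := lt_of_lt_of_le hwd (le_trans (min_le_left _ _) (min_le_left _ _))
      rw [Real.dist_eq, ← h0]
      show |(if w ≤ 0 then w else w + g w) - (if (0:ℝ) ≤ 0 then (0:ℝ) else 0 + g 0)| < ε
      rw [if_pos le_rfl, sub_zero, abs_lt]
      constructor
      · linarith
      · linarith
    · apply ContinuousAt.continuousWithinAt
      have hc : ContinuousAt (fun x : ℝ => x + (P (2*x) - P x)/x) v := by
        apply continuousAt_id.add
        exact ((hPc.comp (continuous_const.mul continuous_id)).continuousAt.sub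
          hPc.continuousAt).div continuousAt_id (ne_of_gt h0)
      have heq : (fun x : ℝ => x + (P (2*x) - P x)/x) =ᶠ[nhds v]
          (fun v => if v ≤ 0 then v else v + g v) := by
        filter_upwards [Ioi_mem_nhds h0] with x hx
        rw [if_neg (not_le.2 hx), hgP x hx]
      exact hc.congr heq
  · -- strict mono
    intro v hv w hw hvw
    show (if v ≤ 0 then v else v + g v) < (if w ≤ 0 then w else w + g w)
    rcases eq_or_lt_of_le (Set.mem_Ici.mp hv : (0:ℝ) ≤ v) with h0 | h0
    · rw [← h0] at hvw ⊢
      rw [if_pos le_rfl, if_neg (not_le.2 hvw)]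
      have := hgnn w hw
      linarith
    · rw [if_neg (not_le.2 h0), if_neg (not_le.2 (lt_trans h0 hvw))]
      have := hgmono v w h0.le hvw.le
      linarith
  · -- nonneg
    intro r hr
    show (0:ℝ) ≤ (if r ≤ 0 then r else r + g r)
    rcases eq_or_lt_of_le hr with h0 | h0
    · simp [← h0]
    · rw [if_neg (not_le.2 h0)]
      linarith [hgnn r hr]
  · -- unbounded
    intro M
    refine ⟨max M 0 + 1, by positivity, ?_⟩
    show M < (if max M 0 + 1 ≤ 0 then max M 0 + 1 else max M 0 + 1 + g (max M 0 + 1))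
    rw [if_neg (not_le.2 (by positivity : (0:ℝ) < max M 0 + 1))]
    have := hgnn (max M 0 + 1) (by positivity)
    have := le_max_left M 0
    linarith
  · -- majorization
    intro v hv
    show φ v ≤ (if v ≤ 0 then v else v + g v)
    rcases eq_or_lt_of_le hv with h0 | h0
    · rw [← h0, if_pos le_rfl, hzero 0 le_rfl]
    · rw [if_neg (not_le.2 h0)]
      linarith [hglb v hv]

lemma exists_settle {f : ℝ → ℝ} (hf : AntitoneOn f (Ici 0))
    (h0 : Tendsto f atTop (nhds 0)) {ε : ℝ} (hε : 0 < ε) :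
    ∃ T, 0 ≤ T ∧ ∀ t, T ≤ t → f t ≤ ε := by
  obtain ⟨t₀, ht₀, ht₀0⟩ := ((h0.eventually_lt_const hε).and (eventually_ge_atTop (0:ℝ))).exists
  exact ⟨t₀, ht₀0, fun t ht => le_trans (hf ht₀0 (le_trans ht₀0 ht) ht) ht₀.le⟩

lemma finite_min {N : ℕ} {Q : ℕ → ℝ → Prop} (h : ∀ n, n < N → ∃ δ, 0 < δ ∧ Q n δ)
    (hmono : ∀ n δ δ', 0 < δ' → δ' ≤ δ → Q n δ → Q n δ') :
    ∃ δ, 0 < δ ∧ ∀ n, n < N → Q n δ := by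
  induction N with
  | zero => exact ⟨1, one_pos, fun n hn => absurd hn (Nat.not_lt_zero n)⟩
  | succ N ih =>
    obtain ⟨δ₁, hδ₁, hQ₁⟩ := ih (fun n hn => h n (hn.trans (Nat.lt_succ_self N)))
    obtain ⟨δ₂, hδ₂, hQ₂⟩ := h N (Nat.lt_succ_self N)
    refine ⟨min δ₁ δ₂, lt_min hδ₁ hδ₂, fun n hn => ?_⟩
    rcases Nat.lt_succ_iff_lt_or_eq.mp hn with h' | h'
    · exact hmono n δ₁ _ (lt_min hδ₁ hδ₂) (min_le_left _ _) (hQ₁ n h')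
    · subst h'; exact hmono n δ₂ _ (lt_min hδ₁ hδ₂) (min_le_right _ _) hQ₂

/-- Sontag's `KL`-lemma. -/
theorem sontag_KL_lemma (β : ℝ → ℝ → ℝ) (hβ : ClassKL β) :
    ∃ α₁ α₂ : ℝ → ℝ, ClassKInf α₁ ∧ ClassKInf α₂ ∧
      ∀ r t : ℝ, 0 ≤ r → 0 ≤ t → β r t ≤ α₂ (α₁ r * Real.exp (-t)) := by
  obtain ⟨hK, hL⟩ := hβ
  have hmonoR : ∀ t, 0 ≤ t → ∀ r s : ℝ, 0 ≤ r → r ≤ s → β r t ≤ β s t :=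
    fun t ht r s hr hrs => ((hK t ht).2.1.monotoneOn) hr (le_trans hr hrs) hrs
  have hnnβ : ∀ r t : ℝ, 0 ≤ r → 0 ≤ t → 0 ≤ β r t := fun r t hr ht => (hK t ht).2.2.2 r hr
  have hzβ : ∀ t : ℝ, 0 ≤ t → β 0 t = 0 := fun t ht => (hK t ht).2.2.1
  have hanti : ∀ r : ℝ, 0 < r → AntitoneOn (β r) (Ici 0) := fun r hr => (hL r hr).2.1
  have htendβ : ∀ r : ℝ, 0 < r → Tendsto (β r) atTop (nhds 0) := fun r hr => (hL r hr).2.2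
  -- settling times
  have hTn : ∀ n : ℕ, ∃ T, 0 ≤ T ∧ ∀ t, T ≤ t → β ((n:ℝ)+1) t ≤ 1/((n:ℝ)+1) :=
    fun n => exists_settle (hanti _ (by positivity)) (htendβ _ (by positivity)) (by positivity)
  choose T hT0 hTle using hTn
  set Cn : ℕ → ℝ := fun n => Real.exp (T n + ((n:ℝ)+1)) with hCndef
  set cm : ℕ → ℝ := fun m => Real.exp (-((m:ℝ)+1)) with hcmdef
  have hCpos : ∀ n, 0 < Cn n := fun n => Real.exp_pos _
  have hcpos : ∀ m, 0 < cm m := fun m => Real.exp_pos _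
  have hlogC : ∀ n, Real.log (Cn n) = T n + ((n:ℝ)+1) := fun n => Real.log_exp _
  have hlogc : ∀ m, Real.log (cm m) = -((m:ℝ)+1) := fun m => Real.log_exp _
  set Bf : ℕ → ℝ → ℝ :=
    fun n v => if v ≤ 0 then 0 else β ((n:ℝ)+1) (max 0 (Real.log (Cn n / v))) with hBfdef
  set Ef : ℕ → ℝ → ℝ :=
    fun m v => if v ≤ 0 then 0 else β (1/((m:ℝ)+1)) (max 0 (Real.log (cm m / v))) with hEfdef
  have hBnn : ∀ n v, 0 ≤ Bf n v := by
    intro n v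
    show (0:ℝ) ≤ if v ≤ 0 then 0 else β ((n:ℝ)+1) (max 0 (Real.log (Cn n / v)))
    split
    · exact le_rfl
    · exact hnnβ _ _ (by positivity) (le_max_left _ _)
  have hEnn : ∀ m v, 0 ≤ Ef m v := by
    intro m v
    show (0:ℝ) ≤ if v ≤ 0 then 0 else β (1/((m:ℝ)+1)) (max 0 (Real.log (cm m / v)))
    split
    · exact le_rfl
    · exact hnnβ _ _ (by positivity) (le_max_left _ _)
  -- evaluation lemmas
  have hBeval : ∀ (n : ℕ) (t : ℝ), 0 ≤ t → Bf n (Cn n * Real.exp (-t)) = β ((n:ℝ)+1) t := by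
    intro n t ht
    have hv : (0:ℝ) < Cn n * Real.exp (-t) := by positivity
    show (if Cn n * Real.exp (-t) ≤ 0 then 0 else
      β ((n:ℝ)+1) (max 0 (Real.log (Cn n / (Cn n * Real.exp (-t)))))) = β ((n:ℝ)+1) t
    rw [if_neg (not_le.2 hv)]
    have hq : Cn n / (Cn n * Real.exp (-t)) = Real.exp t := by
      rw [Real.exp_neg]
      field_simp
      exact div_self (ne_of_gt (hCpos n))
    rw [hq, Real.log_exp, max_eq_right ht]
  have hEeval : ∀ (m : ℕ) (t : ℝ), 0 ≤ t →
      Ef m (cm m * Real.exp (-t)) = β (1/((m:ℝ)+1)) t := by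
    intro m t ht
    have hv : (0:ℝ) < cm m * Real.exp (-t) := by positivity
    show (if cm m * Real.exp (-t) ≤ 0 then 0 else
      β (1/((m:ℝ)+1)) (max 0 (Real.log (cm m / (cm m * Real.exp (-t)))))) = β (1/((m:ℝ)+1)) t
    rw [if_neg (not_le.2 hv)]
    have hq : cm m / (cm m * Real.exp (-t)) = Real.exp t := by
      rw [Real.exp_neg]
      field_simp
      exact div_self (ne_of_gt (hcpos m))
    rw [hq, Real.log_exp, max_eq_right ht]
  -- bounds
  have hBsmall : ∀ (n : ℕ) (v : ℝ), 0 < v → v ≤ Real.exp ((n:ℝ)+1) →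
      Bf n v ≤ 1/((n:ℝ)+1) := by
    intro n v hv hvn
    show (if v ≤ 0 then 0 else β ((n:ℝ)+1) (max 0 (Real.log (Cn n / v)))) ≤ 1/((n:ℝ)+1)
    rw [if_neg (not_le.2 hv)]
    have hlv : Real.log v ≤ (n:ℝ)+1 := (Real.log_le_iff_le_exp hv).2 hvn
    have hlog : T n ≤ Real.log (Cn n / v) := by
      rw [Real.log_div (ne_of_gt (hCpos n)) (ne_of_gt hv), hlogC n]
      linarith
    rw [max_eq_right (le_trans (hT0 n) hlog)]
    exact hTle n _ hlog
  have hBbig : ∀ (n K : ℕ) (v : ℝ), 0 < v → ((n:ℝ)+1) ≤ ((K:ℝ)+1) →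
      Bf n v ≤ β ((K:ℝ)+1) 0 := by
    intro n K v hv hnK
    show (if v ≤ 0 then 0 else β ((n:ℝ)+1) (max 0 (Real.log (Cn n / v)))) ≤ β ((K:ℝ)+1) 0
    rw [if_neg (not_le.2 hv)]
    have h1 : β ((n:ℝ)+1) (max 0 (Real.log (Cn n / v))) ≤ β ((n:ℝ)+1) 0 :=
      hanti _ (by positivity) (Set.mem_Ici.2 le_rfl) (Set.mem_Ici.2 (le_max_left _ _)) (le_max_left _ _)
    exact le_trans h1 (hmonoR 0 le_rfl _ _ (by positivity) hnK)
  have hEbound : ∀ (m : ℕ) (v : ℝ), Ef m v ≤ β (1/((m:ℝ)+1)) 0 := by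
    intro m v
    show (if v ≤ 0 then 0 else β (1/((m:ℝ)+1)) (max 0 (Real.log (cm m / v)))) ≤ β (1/((m:ℝ)+1)) 0
    split
    · exact hnnβ _ _ (by positivity) le_rfl
    · exact hanti _ (by positivity) (Set.mem_Ici.2 le_rfl) (Set.mem_Ici.2 (le_max_left _ _)) (le_max_left _ _)
  have hEbound1 : ∀ (m : ℕ) (v : ℝ), Ef m v ≤ β 1 0 := by
    intro m v
    refine le_trans (hEbound m v) (hmonoR 0 le_rfl _ _ (by positivity) ?_)
    rw [div_le_one (by positivity)]
    linarith [Nat.cast_nonneg (α := ℝ) m]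
  -- monotonicity in v
  have hBmono : ∀ (n : ℕ) (v w : ℝ), v ≤ w → Bf n v ≤ Bf n w := by
    intro n v w hvw
    rcases le_or_gt w 0 with hw | hw
    · show (if v ≤ 0 then _ else _) ≤ (if w ≤ 0 then _ else _)
      rw [if_pos hw, if_pos (le_trans hvw hw)]
    rcases le_or_gt v 0 with hv | hv
    · show (if v ≤ 0 then (0:ℝ) else _) ≤ Bf n w
      rw [if_pos hv]; exact hBnn n w
    · show (if v ≤ 0 then 0 else β ((n:ℝ)+1) (max 0 (Real.log (Cn n / v)))) ≤
        (if w ≤ 0 then 0 else β ((n:ℝ)+1) (max 0 (Real.log (Cn n / w))))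
      rw [if_neg (not_le.2 hv), if_neg (not_le.2 hw)]
      have hlog : Real.log (Cn n / w) ≤ Real.log (Cn n / v) := by
        have : Cn n / w ≤ Cn n / v := div_le_div_of_nonneg_left (hCpos n).le hv hvw
        exact (Real.log_le_log_iff (by positivity) (by positivity)).2 this
      exact hanti _ (by positivity) (Set.mem_Ici.2 (le_max_left _ _)) (Set.mem_Ici.2 (le_max_left _ _))
        (max_le_max le_rfl hlog)
  have hEmono : ∀ (m : ℕ) (v w : ℝ), v ≤ w → Ef m v ≤ Ef m w := by
    intro m v w hvw
    rcases le_or_gt w 0 with hw | hw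
    · show (if v ≤ 0 then _ else _) ≤ (if w ≤ 0 then _ else _)
      rw [if_pos hw, if_pos (le_trans hvw hw)]
    rcases le_or_gt v 0 with hv | hv
    · show (if v ≤ 0 then (0:ℝ) else _) ≤ Ef m w
      rw [if_pos hv]; exact hEnn m w
    · show (if v ≤ 0 then 0 else β (1/((m:ℝ)+1)) (max 0 (Real.log (cm m / v)))) ≤
        (if w ≤ 0 then 0 else β (1/((m:ℝ)+1)) (max 0 (Real.log (cm m / w))))
      rw [if_neg (not_le.2 hv), if_neg (not_le.2 hw)]
      have hlog : Real.log (cm m / w) ≤ Real.log (cm m / v) := by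
        have : cm m / w ≤ cm m / v := div_le_div_of_nonneg_left (hcpos m).le hv hvw
        exact (Real.log_le_log_iff (by positivity) (by positivity)).2 this
      exact hanti _ (by positivity) (Set.mem_Ici.2 (le_max_left _ _)) (Set.mem_Ici.2 (le_max_left _ _))
        (max_le_max le_rfl hlog)
  -- boundedness of the families
  have hDbdd : ∀ v : ℝ, 0 < v → BddAbove (Set.range fun n => Bf n v) := by
    intro v hv
    refine ⟨max 1 (β ((⌈Real.log v⌉₊:ℝ)+1) 0), ?_⟩
    rintro x ⟨n, rfl⟩
    rcases le_or_gt (Real.log v) ((n:ℝ)+1) with h | h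
    · have hvn : v ≤ Real.exp ((n:ℝ)+1) := by
        rw [← Real.exp_log hv]; exact Real.exp_le_exp.2 h
      refine le_trans (hBsmall n v hv hvn) (le_trans ?_ (le_max_left _ _))
      rw [div_le_one (by positivity)]
      linarith [Nat.cast_nonneg (α := ℝ) n]
    · have hK : ((n:ℝ)+1) ≤ ((⌈Real.log v⌉₊:ℝ)+1) := by
        have := Nat.le_ceil (Real.log v); linarith
      exact le_trans (hBbig n _ v hv hK) (le_max_right _ _)
  have hEbdd : ∀ v : ℝ, BddAbove (Set.range fun m => Ef m v) := by
    intro v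
    exact ⟨β 1 0, by rintro x ⟨m, rfl⟩; exact hEbound1 m v⟩
  set D : ℝ → ℝ := fun v => ⨆ n, Bf n v with hDdef
  set E : ℝ → ℝ := fun v => ⨆ m, Ef m v with hEdef
  set φ₂ : ℝ → ℝ := fun v => if v ≤ 0 then 0 else max (D v) (E v) with hφ₂def
  have hDnn : ∀ v, 0 ≤ D v := fun v => Real.iSup_nonneg (fun n => hBnn n v)
  have hEnn' : ∀ v, 0 ≤ E v := fun v => Real.iSup_nonneg (fun m => hEnn m v)
  -- φ₂ hypotheses for the majorant lemma
  have hφ₂zero : ∀ v : ℝ, v ≤ 0 → φ₂ v = 0 := by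
    intro v hv
    show (if v ≤ 0 then 0 else max (D v) (E v)) = 0
    rw [if_pos hv]
  have hφ₂mono : Monotone φ₂ := by
    intro v w hvw
    rcases le_or_gt w 0 with hw | hw
    · rw [hφ₂zero v (le_trans hvw hw), hφ₂zero w hw]
    rcases le_or_gt v 0 with hv | hv
    · rw [hφ₂zero v hv]
      show (0:ℝ) ≤ if w ≤ 0 then 0 else max (D w) (E w)
      rw [if_neg (not_le.2 hw)]
      exact le_trans (hDnn w) (le_max_left _ _)
    · show (if v ≤ 0 then 0 else max (D v) (E v)) ≤ (if w ≤ 0 then 0 else max (D w) (E w))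
      rw [if_neg (not_le.2 hv), if_neg (not_le.2 hw)]
      apply max_le_max
      · exact Real.iSup_le (fun n => le_trans (hBmono n v w hvw) (le_ciSup (hDbdd w hw) n))
          (hDnn w)
      · exact Real.iSup_le (fun m => le_trans (hEmono m v w hvw) (le_ciSup (hEbdd w) m))
          (hEnn' w)
  have hφ₂tend : ∀ ε : ℝ, 0 < ε → ∃ δ, 0 < δ ∧ ∀ v, 0 < v → v ≤ δ → φ₂ v ≤ ε := by
    intro ε hε
    -- the B-family
    set N : ℕ := ⌈1/ε⌉₊ with hN
    have hNε : 1/((N:ℝ)+1) ≤ ε := by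
      have h1 : 1/ε ≤ (N:ℝ) := Nat.le_ceil _
      rw [div_le_iff₀ (by positivity)]
      have h2 : ε * (1/ε) = 1 := by field_simp
      nlinarith [mul_le_mul_of_nonneg_left h1 hε.le]
    obtain ⟨δB, hδB, hδBQ⟩ := finite_min
      (N := N) (Q := fun n δ => ∀ v, 0 < v → v ≤ δ → Bf n v ≤ ε)
      (by
        intro n _
        obtain ⟨S, hS0, hSle⟩ := exists_settle (hanti ((n:ℝ)+1) (by positivity))
          (htendβ _ (by positivity)) hε
        refine ⟨Cn n * Real.exp (-S), by positivity, ?_⟩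
        intro v hv hvδ
        show (if v ≤ 0 then 0 else β ((n:ℝ)+1) (max 0 (Real.log (Cn n / v)))) ≤ ε
        rw [if_neg (not_le.2 hv)]
        have hlog : S ≤ Real.log (Cn n / v) := by
          have hlv : Real.log v ≤ Real.log (Cn n) - S := by
            have h := (Real.log_le_log_iff hv (by positivity)).2 hvδ
            rw [Real.log_mul (ne_of_gt (hCpos n)) (ne_of_gt (Real.exp_pos _)),
              Real.log_exp (-S)] at h
            linarith
          rw [Real.log_div (ne_of_gt (hCpos n)) (ne_of_gt hv)]
          linarith
        rw [max_eq_right (le_trans hS0 hlog)]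
        exact hSle _ hlog)
      (fun n δ δ' hδ' hle hQ v hv hvδ => hQ v hv (le_trans hvδ hle))
    -- the E-family
    have hEtend : Tendsto (fun m : ℕ => β (1/((m:ℝ)+1)) 0) atTop (nhds 0) := by
      have hc0 : ContinuousWithinAt (fun r => β r 0) (Ici 0) 0 := (hK 0 le_rfl).1 0 (Set.mem_Ici.2 le_rfl)
      have hseq : Tendsto (fun m : ℕ => 1/((m:ℝ)+1)) atTop (nhdsWithin 0 (Ici 0)) := by
        rw [tendsto_nhdsWithin_iff]
        exact ⟨tendsto_one_div_add_atTop_nhds_zero_nat,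
          Filter.Eventually.of_forall (fun m => Set.mem_Ici.2 (by positivity))⟩
      have := hc0.tendsto.comp hseq
      rwa [hzβ 0 le_rfl] at this
    obtain ⟨M, hM⟩ := Filter.eventually_atTop.1 (hEtend.eventually_lt_const hε)
    obtain ⟨δE, hδE, hδEQ⟩ := finite_min
      (N := M) (Q := fun m δ => ∀ v, 0 < v → v ≤ δ → Ef m v ≤ ε)
      (by
        intro m _
        obtain ⟨S, hS0, hSle⟩ := exists_settle (hanti (1/((m:ℝ)+1)) (by positivity))
          (htendβ _ (by positivity)) hε
        refine ⟨cm m * Real.exp (-S), by positivity, ?_⟩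
        intro v hv hvδ
        show (if v ≤ 0 then 0 else β (1/((m:ℝ)+1)) (max 0 (Real.log (cm m / v)))) ≤ ε
        rw [if_neg (not_le.2 hv)]
        have hlog : S ≤ Real.log (cm m / v) := by
          have hlv : Real.log v ≤ Real.log (cm m) - S := by
            have h := (Real.log_le_log_iff hv (by positivity)).2 hvδ
            rw [Real.log_mul (ne_of_gt (hcpos m)) (ne_of_gt (Real.exp_pos _)),
              Real.log_exp (-S)] at h
            linarith
          rw [Real.log_div (ne_of_gt (hcpos m)) (ne_of_gt hv)]
          linarith
        rw [max_eq_right (le_trans hS0 hlog)]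
        exact hSle _ hlog)
      (fun m δ δ' hδ' hle hQ v hv hvδ => hQ v hv (le_trans hvδ hle))
    refine ⟨min 1 (min δB δE), by positivity, ?_⟩
    intro v hv hvδ
    show (if v ≤ 0 then 0 else max (D v) (E v)) ≤ ε
    rw [if_neg (not_le.2 hv)]
    have hv1 : v ≤ 1 := le_trans hvδ (min_le_left _ _)
    have hvB : v ≤ δB := le_trans hvδ (le_trans (min_le_right _ _) (min_le_left _ _))
    have hvE : v ≤ δE := le_trans hvδ (le_trans (min_le_right _ _) (min_le_right _ _))
    apply max_le
    · refine Real.iSup_le (fun n => ?_) hε.le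
      rcases lt_or_ge n N with hn | hn
      · exact hδBQ n hn v hv hvB
      · have hvn : v ≤ Real.exp ((n:ℝ)+1) := le_trans hv1 (Real.one_le_exp (by positivity))
        refine le_trans (hBsmall n v hv hvn) (le_trans ?_ hNε)
        apply one_div_le_one_div_of_le (by positivity)
        have : (N:ℝ) ≤ (n:ℝ) := Nat.cast_le.2 hn
        linarith
    · refine Real.iSup_le (fun m => ?_) hε.le
      rcases lt_or_ge m M with hm | hm
      · exact hδEQ m hm v hv hvE
      · exact le_trans (hEbound m v) (hM m hm).le
  -- φ₁
  set φ₁ : ℝ → ℝ := fun r => if r ≤ 0 then 0 else if r < 1 then Real.exp (-(⌊1/r⌋₊:ℝ))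
    else ∑ k ∈ Finset.range (⌈r⌉₊ + 1), Cn k with hφ₁def
  have hφ₁zero : ∀ r : ℝ, r ≤ 0 → φ₁ r = 0 := by
    intro r hr
    show (if r ≤ 0 then 0 else _) = 0
    rw [if_pos hr]
  have hCsum_pos : ∀ K : ℕ, ∀ n ∈ Finset.range (K+1), (0:ℝ) ≤ Cn n :=
    fun K n _ => (hCpos n).le
  have hφ₁mono : Monotone φ₁ := by
    intro v w hvw
    rcases le_or_gt v 0 with hv | hv
    · rw [hφ₁zero v hv]
      show (0:ℝ) ≤ if w ≤ 0 then 0 else if w < 1 then Real.exp (-(⌊1/w⌋₊:ℝ))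
        else ∑ k ∈ Finset.range (⌈w⌉₊ + 1), Cn k
      split
      · exact le_rfl
      · split
        · positivity
        · exact Finset.sum_nonneg (hCsum_pos _)
    have hw : 0 < w := lt_of_lt_of_le hv hvw
    show (if v ≤ 0 then 0 else if v < 1 then Real.exp (-(⌊1/v⌋₊:ℝ))
        else ∑ k ∈ Finset.range (⌈v⌉₊ + 1), Cn k) ≤
      (if w ≤ 0 then 0 else if w < 1 then Real.exp (-(⌊1/w⌋₊:ℝ))
        else ∑ k ∈ Finset.range (⌈w⌉₊ + 1), Cn k)
    rw [if_neg (not_le.2 hv), if_neg (not_le.2 hw)]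
    rcases lt_or_ge w 1 with hw1 | hw1
    · have hv1 : v < 1 := lt_of_le_of_lt hvw hw1
      rw [if_pos hv1, if_pos hw1]
      apply Real.exp_le_exp.2
      apply neg_le_neg
      apply Nat.cast_le.2
      exact Nat.floor_le_floor (one_div_le_one_div_of_le hv hvw)
    · rw [if_neg (not_lt.2 hw1)]
      rcases lt_or_ge v 1 with hv1 | hv1
      · rw [if_pos hv1]
        have h1 : Real.exp (-(⌊1/v⌋₊:ℝ)) ≤ 1 := Real.exp_le_one_iff.2 (neg_nonpos.2 (Nat.cast_nonneg _))
        have h2 : (1:ℝ) ≤ Cn 0 := Real.one_le_exp (by linarith [hT0 0])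
        have h3 : Cn 0 ≤ ∑ k ∈ Finset.range (⌈w⌉₊ + 1), Cn k :=
          Finset.single_le_sum (hCsum_pos _) (Finset.mem_range.2 (Nat.succ_le_succ (Nat.zero_le _)))
        linarith
      · rw [if_neg (not_lt.2 hv1)]
        apply Finset.sum_le_sum_of_subset_of_nonneg
        · exact Finset.range_subset_range.2 (Nat.succ_le_succ (Nat.ceil_le_ceil hvw))
        · intro i _ _; exact (hCpos i).le
  have hφ₁tend : ∀ ε : ℝ, 0 < ε → ∃ δ, 0 < δ ∧ ∀ r, 0 < r → r ≤ δ → φ₁ r ≤ ε := by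
    intro ε hε
    have hexp : Tendsto (fun m : ℕ => Real.exp (-(m:ℝ))) atTop (nhds 0) :=
      Real.tendsto_exp_atBot.comp (tendsto_neg_atTop_atBot.comp tendsto_natCast_atTop_atTop)
    obtain ⟨M, hM⟩ := (hexp.eventually_lt_const hε).exists
    refine ⟨1/((M:ℝ)+2), by positivity, ?_⟩
    intro r hr hrδ
    have hr1 : r < 1 := by
      apply lt_of_le_of_lt hrδ
      rw [div_lt_one (by positivity)]
      linarith [Nat.cast_nonneg (α := ℝ) M]
    show (if r ≤ 0 then 0 else if r < 1 then Real.exp (-(⌊1/r⌋₊:ℝ))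
      else ∑ k ∈ Finset.range (⌈r⌉₊ + 1), Cn k) ≤ ε
    rw [if_neg (not_le.2 hr), if_pos hr1]
    have hfl : (M:ℝ) ≤ (⌊1/r⌋₊:ℝ) := by
      have h1 : ((M+2:ℕ):ℝ) ≤ 1/r := by
        push_cast
        rw [le_div_iff₀ hr]
        calc ((M:ℝ)+2) * r ≤ ((M:ℝ)+2) * (1/((M:ℝ)+2)) :=
              mul_le_mul_of_nonneg_left hrδ (by positivity)
          _ = 1 := by field_simp
      have h2 : (M+2:ℕ) ≤ ⌊1/r⌋₊ := Nat.le_floor h1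
      have := Nat.cast_le (α := ℝ) |>.2 h2
      push_cast at this
      linarith
    calc Real.exp (-(⌊1/r⌋₊:ℝ)) ≤ Real.exp (-(M:ℝ)) := Real.exp_le_exp.2 (by linarith)
      _ ≤ ε := hM.le
  obtain ⟨α₂, hα₂K, hα₂maj⟩ := exists_KInf_majorant φ₂ hφ₂mono hφ₂zero hφ₂tend
  obtain ⟨α₁, hα₁K, hα₁maj⟩ := exists_KInf_majorant φ₁ hφ₁mono hφ₁zero hφ₁tend
  refine ⟨α₁, α₂, hα₁K, hα₂K, ?_⟩
  intro r t hr ht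
  have hα₂mono := hα₂K.1.2.1.monotoneOn
  rcases eq_or_lt_of_le hr with hr0 | hr0
  · rw [← hr0, hzβ t ht, hα₁K.1.2.2.1, zero_mul, hα₂K.1.2.2.1]
  · have hα₁r : φ₁ r ≤ α₁ r := hα₁maj r hr
    have hexp_pos : (0:ℝ) < Real.exp (-t) := Real.exp_pos _
    rcases lt_or_ge r 1 with hr1 | hr1
    · -- small r
      have h1r : 1 ≤ 1/r := one_le_one_div hr0 hr1.le
      set m' : ℕ := ⌊1/r⌋₊ with hm'
      have hm'1 : 1 ≤ m' := Nat.le_floor (by exact_mod_cast h1r)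
      set m : ℕ := m' - 1 with hm
      have hmm : ((m:ℝ)+1) = (m':ℝ) := by
        rw [hm]
        have : (m' - 1 + 1 : ℕ) = m' := Nat.succ_pred_eq_of_pos hm'1
        exact_mod_cast congrArg (Nat.cast (R := ℝ)) this
      have hkey : r ≤ 1/((m:ℝ)+1) := by
        rw [hmm, le_div_iff₀ (by exact_mod_cast hm'1 : (0:ℝ) < (m':ℝ))]
        have h2 : (m':ℝ) ≤ 1/r := Nat.floor_le (by positivity)
        calc r * (m':ℝ) ≤ r * (1/r) := by
              apply mul_le_mul_of_nonneg_left h2 hr0.le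
          _ = 1 := by field_simp
      have hφ₁r : φ₁ r = cm m := by
        show (if r ≤ 0 then 0 else if r < 1 then Real.exp (-(⌊1/r⌋₊:ℝ))
          else ∑ k ∈ Finset.range (⌈r⌉₊ + 1), Cn k) = cm m
        rw [if_neg (not_le.2 hr0), if_pos hr1]
        show Real.exp (-(m':ℝ)) = Real.exp (-((m:ℝ)+1))
        rw [hmm]
      set v₀ : ℝ := cm m * Real.exp (-t) with hv₀
      have hv₀pos : 0 < v₀ := by positivity
      have step1 : β r t ≤ β (1/((m:ℝ)+1)) t := hmonoR t ht r _ hr0.le hkey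
      have step2 : β (1/((m:ℝ)+1)) t = Ef m v₀ := (hEeval m t ht).symm
      have step3 : Ef m v₀ ≤ E v₀ := le_ciSup (hEbdd v₀) m
      have step4 : E v₀ ≤ φ₂ v₀ := by
        show E v₀ ≤ if v₀ ≤ 0 then 0 else max (D v₀) (E v₀)
        rw [if_neg (not_le.2 hv₀pos)]
        exact le_max_right _ _
      have step5 : φ₂ v₀ ≤ α₂ v₀ := hα₂maj v₀ hv₀pos.le
      have step6 : α₂ v₀ ≤ α₂ (α₁ r * Real.exp (-t)) := by
        apply hα₂mono hv₀pos.le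
        · show (0:ℝ) ≤ α₁ r * Real.exp (-t)
          have : 0 ≤ α₁ r := le_trans (by rw [hφ₁r]; exact (hcpos m).le) hα₁r
          positivity
        · rw [hv₀]
          apply mul_le_mul_of_nonneg_right _ hexp_pos.le
          rw [← hφ₁r]
          exact hα₁r
      linarith [step1, step2.le, step3, step4, step5, step6,
        step2 ▸ step1]
    · -- large r
      set n' : ℕ := ⌈r⌉₊ with hn'
      have hn'1 : 1 ≤ n' := Nat.one_le_ceil_iff.2 hr0
      set n : ℕ := n' - 1 with hn
      have hnn2 : ((n:ℝ)+1) = (n':ℝ) := by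
        rw [hn]
        have : (n' - 1 + 1 : ℕ) = n' := Nat.succ_pred_eq_of_pos hn'1
        exact_mod_cast congrArg (Nat.cast (R := ℝ)) this
      have hkey : r ≤ (n:ℝ)+1 := by rw [hnn2]; exact Nat.le_ceil r
      have hφ₁r : Cn n ≤ φ₁ r := by
        show Cn n ≤ if r ≤ 0 then 0 else if r < 1 then Real.exp (-(⌊1/r⌋₊:ℝ))
          else ∑ k ∈ Finset.range (⌈r⌉₊ + 1), Cn k
        rw [if_neg (not_le.2 hr0), if_neg (not_lt.2 hr1)]
        apply Finset.single_le_sum (hCsum_pos _)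
        apply Finset.mem_range.2
        omega
      set v₀ : ℝ := Cn n * Real.exp (-t) with hv₀
      have hv₀pos : 0 < v₀ := by positivity
      have step1 : β r t ≤ β ((n:ℝ)+1) t := hmonoR t ht r _ hr0.le hkey
      have step2 : β ((n:ℝ)+1) t = Bf n v₀ := (hBeval n t ht).symm
      have step3 : Bf n v₀ ≤ D v₀ := le_ciSup (hDbdd v₀ hv₀pos) n
      have step4 : D v₀ ≤ φ₂ v₀ := by
        show D v₀ ≤ if v₀ ≤ 0 then 0 else max (D v₀) (E v₀)
        rw [if_neg (not_le.2 hv₀pos)]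
        exact le_max_left _ _
      have step5 : φ₂ v₀ ≤ α₂ v₀ := hα₂maj v₀ hv₀pos.le
      have step6 : α₂ v₀ ≤ α₂ (α₁ r * Real.exp (-t)) := by
        apply hα₂mono hv₀pos.le
        · show (0:ℝ) ≤ α₁ r * Real.exp (-t)
          have : 0 ≤ α₁ r := le_trans (hCpos n).le (le_trans hφ₁r hα₁r)
          positivity
        · rw [hv₀]
          apply mul_le_mul_of_nonneg_right _ hexp_pos.le
          exact le_trans hφ₁r hα₁r
      linarith [step1, step3, step4, step5, step6, step2 ▸ step1]
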